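/- arXiv:1812.07956 — 4 statements merged into one kernel-verified Lean document; each statement's English description precedes it below -/
import Mathlib

section
/- Assume moreover h(w₀) = 0. Then there exist constants C > 0 and α₀ > ‖y⋆‖/C₀ such that for all α ≥ α₀, sup_{t ≥ 0} ‖w_α(t) − w₀‖ ≤ C/α. -/
open scoped RealInnerProductSpace NNReal

open Set

/-- First-order condition for a differentiable convex function on `univ`. -/
lemma convexOn_first_order {H : Type*} [NormedAddCommGroup H] [InnerProductSpace ℝ H]
    {g : H → ℝ} (hg : ConvexOn ℝ Set.univ g) {y : H} (hd : DifferentiableAt ℝ g y) (z : H) :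
    g y + fderiv ℝ g y (z - y) ≤ g z := by
  set φ : ℝ → ℝ := fun t => g (y + t • (z - y)) with hφ
  have hconv : ConvexOn ℝ Set.univ φ := by
    have := hg.comp_affineMap (AffineMap.lineMap y z : ℝ →ᵃ[ℝ] H)
    have hpre : ((AffineMap.lineMap y z : ℝ →ᵃ[ℝ] H) ⁻¹' Set.univ) = Set.univ := by simp
    rw [hpre] at this
    have hfeq : φ = g ∘ (AffineMap.lineMap y z : ℝ →ᵃ[ℝ] H) := by
      funext t
      simp [φ, AffineMap.lineMap_apply, add_comm]
    rw [hfeq]; exact this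
  have hder : HasDerivAt φ (fderiv ℝ g y (z - y)) 0 := by
    have h1 : HasDerivAt (fun t : ℝ => y + t • (z - y)) (z - y) 0 := by
      simpa using ((hasDerivAt_id (0:ℝ)).smul_const (z - y)).const_add y
    have hd' : HasFDerivAt g (fderiv ℝ g y) (y + (0:ℝ) • (z - y)) := by
      simpa using hd.hasFDerivAt
    exact hd'.comp_hasDerivAt 0 h1
  have hslope := hconv.le_slope_of_hasDerivAt (mem_univ (0:ℝ)) (mem_univ (1:ℝ)) one_pos hder
  have : slope φ 0 1 = g z - g y := by
    simp [slope_def_field, φ]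
  rw [this] at hslope
  linarith

lemma fderiv_apply_eq_inner_gradient {H : Type*} [NormedAddCommGroup H] [InnerProductSpace ℝ H]
    [CompleteSpace H] (f : H → ℝ) (y v : H) : fderiv ℝ f y v = ⟪gradient f y, v⟫ := by
  rw [gradient, InnerProductSpace.toDual_symm_apply]

lemma strong_first_order {H : Type*} [NormedAddCommGroup H] [InnerProductSpace ℝ H]
    [CompleteSpace H] {R : H → ℝ} {m : ℝ} (hRdiff : Differentiable ℝ R)
    (hRconv : ConvexOn ℝ Set.univ (fun y => R y - m / 2 * ‖y‖ ^ 2)) (y z : H) :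
    R y + ⟪gradient R y, z - y⟫ + m / 2 * ‖z - y‖ ^ 2 ≤ R z := by
  set g : H → ℝ := fun y => R y - m / 2 * ‖y‖ ^ 2 with hg
  have hgd : HasFDerivAt g (fderiv ℝ R y - (m / 2) • (2 • (innerSL ℝ y))) y :=
    (hRdiff y).hasFDerivAt.sub (((hasStrictFDerivAt_norm_sq y).hasFDerivAt).const_mul (m / 2))
  have hkey := convexOn_first_order hRconv hgd.differentiableAt z
  rw [hgd.fderiv] at hkey
  have h1 : (fderiv ℝ R y - (m / 2) • (2 • (innerSL ℝ y))) (z - y)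
      = ⟪gradient R y, z - y⟫ - m * ⟪y, z - y⟫ := by
    simp [fderiv_apply_eq_inner_gradient, two_smul, -inner_gradient_left]
    ring
  rw [h1] at hkey
  have h2 : ‖z - y‖ ^ 2 = ‖z‖ ^ 2 - ‖y‖ ^ 2 - 2 * ⟪y, z - y⟫ := by
    have := norm_sub_sq_real z y
    have h3 : ⟪y, z - y⟫ = ⟪y, z⟫ - ‖y‖ ^ 2 := by
      rw [inner_sub_right, real_inner_self_eq_norm_sq]
    have hc : (inner ℝ z y : ℝ) = inner ℝ y z := real_inner_comm y z
    linarith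
  simp only [g] at hkey
  have hm2 : m / 2 * ‖z - y‖ ^ 2
      = m / 2 * ‖z‖ ^ 2 - m / 2 * ‖y‖ ^ 2 - m * ⟪y, z - y⟫ := by
    linear_combination (m / 2) * h2
  linarith [hkey, hm2]

lemma pl_ineq {H : Type*} [NormedAddCommGroup H] [InnerProductSpace ℝ H]
    [CompleteSpace H] {R : H → ℝ} {m : ℝ} (hm : 0 < m) (hRdiff : Differentiable ℝ R)
    (hRconv : ConvexOn ℝ Set.univ (fun y => R y - m / 2 * ‖y‖ ^ 2))
    (ystar : H) (hmin : ∀ y, R ystar ≤ R y) (y : H) :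
    2 * m * (R y - R ystar) ≤ ‖gradient R y‖ ^ 2 := by
  have h1 := strong_first_order hRdiff hRconv y ystar
  have hCS : -(‖gradient R y‖ * ‖ystar - y‖) ≤ ⟪gradient R y, ystar - y⟫ := by
    have := abs_real_inner_le_norm (gradient R y) (ystar - y)
    have := abs_le.1 this
    linarith [this.1]
  nlinarith [sq_nonneg (‖gradient R y‖ - m * ‖ystar - y‖), hmin y]

lemma norm_gradient_sub {H : Type*} [NormedAddCommGroup H] [InnerProductSpace ℝ H]
    [CompleteSpace H] (f : H → ℝ) (x y : H) :
    ‖gradient f x - gradient f y‖ = ‖fderiv ℝ f x - fderiv ℝ f y‖ := by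
  rw [gradient, gradient, ← map_sub, LinearIsometryEquiv.norm_map]

lemma gradient_min_zero {H : Type*} [NormedAddCommGroup H] [InnerProductSpace ℝ H]
    [CompleteSpace H] {R : H → ℝ} {ystar : H} (hmin : ∀ y, R ystar ≤ R y) :
    gradient R ystar = 0 := by
  have h1 : fderiv ℝ R ystar = 0 :=
    IsLocalMin.fderiv_eq_zero (Filter.Eventually.of_forall hmin)
  rw [gradient, h1, map_zero]

lemma smooth_upper {H : Type*} [NormedAddCommGroup H] [InnerProductSpace ℝ H]
    [CompleteSpace H] {R : H → ℝ} {M : ℝ} (hM : 0 < M) (hRdiff : Differentiable ℝ R)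
    (hRgrad : ∀ y z, ‖gradient R y - gradient R z‖ ≤ M * ‖y - z‖)
    {ystar : H} (hmin : ∀ y, R ystar ≤ R y) :
    R 0 - R ystar ≤ M * ‖ystar‖ ^ 2 := by
  have hball : (ystar : H) ∈ Metric.closedBall ystar ‖ystar‖ := by
    simp [norm_nonneg]
  have h0 : (0 : H) ∈ Metric.closedBall ystar ‖ystar‖ := by
    simp [dist_eq_norm, norm_sub_rev]
  have bound : ∀ x ∈ Metric.closedBall ystar ‖ystar‖,
      ‖fderiv ℝ R x - (0 : H →L[ℝ] ℝ)‖ ≤ M * ‖ystar‖ := by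
    intro x hx
    have h2 : fderiv ℝ R ystar = 0 :=
      IsLocalMin.fderiv_eq_zero (Filter.Eventually.of_forall hmin)
    rw [← h2, ← norm_gradient_sub]
    calc ‖gradient R x - gradient R ystar‖ ≤ M * ‖x - ystar‖ := hRgrad x ystar
      _ ≤ M * ‖ystar‖ := by
          have : ‖x - ystar‖ ≤ ‖ystar‖ := by
            simpa [dist_eq_norm] using Metric.mem_closedBall.1 hx
          exact mul_le_mul_of_nonneg_left this hM.le
  have key := (convex_closedBall ystar ‖ystar‖).norm_image_sub_le_of_norm_fderiv_le'
    (fun x _ => hRdiff x) bound hball h0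
  simp only [ContinuousLinearMap.zero_apply, sub_zero] at key
  have : R 0 - R ystar ≤ |R 0 - R ystar| := le_abs_self _
  calc R 0 - R ystar ≤ ‖R 0 - R ystar‖ := le_abs_self _
    _ ≤ M * ‖ystar‖ * ‖(0 : H) - ystar‖ := key
    _ = M * ‖ystar‖ ^ 2 := by rw [zero_sub, norm_neg]; ring

lemma gradient_scaled_comp {E H : Type*} [NormedAddCommGroup E] [InnerProductSpace ℝ E]
    [CompleteSpace E] [NormedAddCommGroup H] [InnerProductSpace ℝ H] [CompleteSpace H]
    (h : E → H) (hdiff : Differentiable ℝ h) (R : H → ℝ) (hRdiff : Differentiable ℝ R)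
    {α : ℝ} (hα : α ≠ 0) (u : E) :
    HasGradientAt (fun u => R (α • h u) / α ^ 2)
      (α⁻¹ • (fderiv ℝ h u).adjoint (gradient R (α • h u))) u := by
  set y₀ := α • h u with hy₀
  have hRg : HasFDerivAt R (InnerProductSpace.toDual ℝ H (gradient R y₀)) y₀ :=
    (hRdiff y₀).hasGradientAt.hasFDerivAt
  have hhg : HasFDerivAt (fun u => α • h u) (α • fderiv ℝ h u) u :=
    ((hdiff u).hasFDerivAt).const_smul α
  have hcomp : HasFDerivAt (fun u => R (α • h u))
      ((InnerProductSpace.toDual ℝ H (gradient R y₀)).comp (α • fderiv ℝ h u)) u :=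
    hRg.comp u hhg
  have hdivd := hcomp.const_mul ((α ^ 2)⁻¹ : ℝ)
  have hfun : (fun u => (α ^ 2)⁻¹ * R (α • h u)) = (fun u => R (α • h u) / α ^ 2) := by
    funext v; rw [div_eq_inv_mul]
  rw [hfun] at hdivd
  have heq : ((α ^ 2)⁻¹ : ℝ) • ((InnerProductSpace.toDual ℝ H (gradient R y₀)).comp
        (α • fderiv ℝ h u))
      = InnerProductSpace.toDual ℝ E (α⁻¹ • (fderiv ℝ h u).adjoint (gradient R y₀)) := by
    ext v
    simp only [ContinuousLinearMap.coe_smul', Pi.smul_apply, ContinuousLinearMap.coe_comp',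
      Function.comp_apply, ContinuousLinearMap.smul_apply, InnerProductSpace.toDual_apply_apply,
      real_inner_smul_left, real_inner_smul_right]
    rw [ContinuousLinearMap.adjoint_inner_left]
    field_simp
    rw [smul_eq_mul]; field_simp
  rw [hasGradientAt_iff_hasFDerivAt, ← heq]
  exact hdivd

lemma deriv_loss_along {E H : Type*} [NormedAddCommGroup E] [InnerProductSpace ℝ E]
    [CompleteSpace E] [NormedAddCommGroup H] [InnerProductSpace ℝ H] [CompleteSpace H]
    (h : E → H) (hdiff : Differentiable ℝ h) (R : H → ℝ) (hRdiff : Differentiable ℝ R)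
    {α : ℝ} (hα : α ≠ 0) (w : ℝ → E) {t : ℝ}
    (hw : HasDerivAt w (-(α⁻¹ • (fderiv ℝ h (w t)).adjoint (gradient R (α • h (w t))))) t) :
    HasDerivAt (fun s => R (α • h (w s)))
      (-‖(fderiv ℝ h (w t)).adjoint (gradient R (α • h (w t)))‖ ^ 2) t := by
  set q := (fderiv ℝ h (w t)).adjoint (gradient R (α • h (w t))) with hq
  have hG := (gradient_scaled_comp h hdiff R hRdiff hα (w t)).hasFDerivAt
  have hcomp := hG.comp_hasDerivAt t hw
  have hval : (InnerProductSpace.toDual ℝ E (α⁻¹ • q)) (-(α⁻¹ • q)) = -(α⁻¹ * α⁻¹ * ‖q‖ ^ 2) := by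
    rw [InnerProductSpace.toDual_apply_apply, inner_neg_right, real_inner_smul_left,
      real_inner_smul_right, real_inner_self_eq_norm_sq]
    ring
  rw [hval] at hcomp
  have hmul := hcomp.const_mul (α ^ 2)
  have hfun : (fun s => α ^ 2 * (R (α • h (w s)) / α ^ 2)) = fun s => R (α • h (w s)) := by
    funext s; field_simp
  have hmul' : HasDerivAt (fun s => α ^ 2 * (R (α • h (w s)) / α ^ 2))
      (α ^ 2 * -(α⁻¹ * α⁻¹ * ‖q‖ ^ 2)) t := hmul
  rw [hfun] at hmul'
  convert hmul' using 1
  field_simp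

set_option maxHeartbeats 2000000 in
/-- **Theorem 2.3 (Over-parameterized lazy training), laziness of parameters.**
Under the over-parameterization assumptions, if moreover `h(w₀) = 0`, then there are
constants `C > 0` and `α₀ > ‖y⋆‖/C₀` such that for all `α ≥ α₀`,
`sup_{t ≥ 0} ‖w_α(t) − w₀‖ ≤ C / α`. -/
theorem lazy_overparam_param_bound
    {p : ℕ} {H : Type*} [NormedAddCommGroup H] [InnerProductSpace ℝ H] [CompleteSpace H]
    (h : EuclideanSpace ℝ (Fin p) → H) (hdiff : Differentiable ℝ h)
    (LDh : ℝ) (hLDh : 0 < LDh)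
    (hDhLip : ∀ u v, ‖fderiv ℝ h u - fderiv ℝ h v‖ ≤ LDh * ‖u - v‖)
    (R : H → ℝ) (hRnonneg : ∀ y, 0 ≤ R y) (hRdiff : Differentiable ℝ R)
    (m M : ℝ) (hm : 0 < m) (hM : 0 < M)
    (hRconv : ConvexOn ℝ Set.univ (fun y => R y - m / 2 * ‖y‖ ^ 2))
    (hRgrad : ∀ y z, ‖gradient R y - gradient R z‖ ≤ M * ‖y - z‖)
    (ystar : H) (hmin : ∀ y, R ystar ≤ R y)
    (w₀ : EuclideanSpace ℝ (Fin p))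
    (σmin : ℝ) (hσ : 0 < σmin)
    (hσmin : ∀ y : H, σmin * ‖y‖ ≤ ‖(fderiv ℝ h w₀).adjoint y‖)
    (C₀ : ℝ)
    (hC₀ : C₀ = σmin ^ 3 / (32 * (M / m) ^ ((3 : ℝ) / 2) * ‖fderiv ℝ h w₀‖ * LDh))
    (h0 : h w₀ = 0)
    (w : ℝ → ℝ → EuclideanSpace ℝ (Fin p))
    (hw0 : ∀ α : ℝ, ‖ystar‖ / C₀ < α → w α 0 = w₀)
    (hwflow : ∀ α : ℝ, ‖ystar‖ / C₀ < α → ∀ t : ℝ, 0 ≤ t →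
      HasDerivAt (w α) (-(gradient (fun u => R (α • h u) / α ^ 2) (w α t))) t) :
    ∃ C > 0, ∃ α₀ : ℝ, ‖ystar‖ / C₀ < α₀ ∧ ∀ α : ℝ, α₀ ≤ α → ∀ t : ℝ, 0 ≤ t →
      ‖w α t - w₀‖ ≤ C / α := by
  have h2m : (0:ℝ) < 2 * m := by linarith
  set c1 : ℝ := (σmin / 2) * Real.sqrt (2 * m) with hc1
  have hc1pos : 0 < c1 := mul_pos (by linarith) (Real.sqrt_pos.2 h2m)
  set C' : ℝ := 2 * Real.sqrt (M * ‖ystar‖ ^ 2) / c1 with hC'def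
  have hC'nonneg : 0 ≤ C' := by positivity
  set C : ℝ := C' + 1 with hCdef
  have hCpos : 0 < C := by linarith
  set r : ℝ := σmin / (2 * LDh) with hrdef
  have hrpos : 0 < r := by positivity
  refine ⟨C, hCpos, max (‖ystar‖ / C₀ + 1) (C / r + 1),
    lt_of_lt_of_le (lt_add_one _) (le_max_left _ _), ?_⟩
  intro α hαα t ht
  have hαy : ‖ystar‖ / C₀ < α :=
    lt_of_lt_of_le (lt_of_lt_of_le (lt_add_one _) (le_max_left _ _)) hαα
  have hαr : C / r + 1 ≤ α := le_trans (le_max_right _ _) hαα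
  have hαpos : 0 < α := lt_of_lt_of_le (by positivity) hαr
  have hα0 : α ≠ 0 := ne_of_gt hαpos
  have hCαr : C / α < r := by
    rw [div_lt_iff₀ hαpos]
    have h1 : C / r < α := lt_of_lt_of_le (lt_add_one _) hαr
    calc C = r * (C / r) := by field_simp
      _ < r * α := mul_lt_mul_of_pos_left h1 hrpos
  -- the flow derivative in usable form
  set q : ℝ → EuclideanSpace ℝ (Fin p) :=
    fun s => (fderiv ℝ h (w α s)).adjoint (gradient R (α • h (w α s))) with hqdef
  have hwder : ∀ s : ℝ, 0 ≤ s → HasDerivAt (w α) (-(α⁻¹ • q s)) s := by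
    intro s hs
    have hfl := hwflow α hαy s hs
    rwa [(gradient_scaled_comp h hdiff R hRdiff hα0 (w α s)).gradient] at hfl
  have hwcont : ∀ s : ℝ, 0 ≤ s → ContinuousAt (w α) s := fun s hs => (hwder s hs).continuousAt
  set g : ℝ → ℝ := fun s => R (α • h (w α s)) - R ystar with hgdef
  have hgnonneg : ∀ s, 0 ≤ g s := fun s => sub_nonneg.2 (hmin _)
  have hgder : ∀ s : ℝ, 0 ≤ s → HasDerivAt g (-‖q s‖ ^ 2) s := fun s hs =>
    (deriv_loss_along h hdiff R hRdiff hα0 (w α) (hwder s hs)).sub_const (R ystar)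
  -- laziness of singular values
  have lazy : ∀ u : EuclideanSpace ℝ (Fin p), ‖u - w₀‖ ≤ r →
      ∀ y : H, (σmin / 2) * ‖y‖ ≤ ‖(fderiv ℝ h u).adjoint y‖ := by
    intro u hu y
    have h1 : ‖(fderiv ℝ h w₀).adjoint y - (fderiv ℝ h u).adjoint y‖ ≤ (σmin / 2) * ‖y‖ := by
      have h2 : (fderiv ℝ h w₀).adjoint y - (fderiv ℝ h u).adjoint y
          = (ContinuousLinearMap.adjoint (fderiv ℝ h w₀ - fderiv ℝ h u)) y := by
        rw [map_sub]; rfl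
      rw [h2]
      calc ‖(ContinuousLinearMap.adjoint (fderiv ℝ h w₀ - fderiv ℝ h u)) y‖
          ≤ ‖ContinuousLinearMap.adjoint (fderiv ℝ h w₀ - fderiv ℝ h u)‖ * ‖y‖ :=
            ContinuousLinearMap.le_opNorm _ _
        _ = ‖fderiv ℝ h w₀ - fderiv ℝ h u‖ * ‖y‖ := by
            rw [LinearIsometryEquiv.norm_map]
        _ ≤ (LDh * ‖w₀ - u‖) * ‖y‖ :=
            mul_le_mul_of_nonneg_right (hDhLip w₀ u) (norm_nonneg y)
        _ ≤ (σmin / 2) * ‖y‖ := by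
            refine mul_le_mul_of_nonneg_right ?_ (norm_nonneg y)
            rw [norm_sub_rev]
            have h3 := mul_le_mul_of_nonneg_left hu hLDh.le
            have h4 : LDh * r = σmin / 2 := by
              rw [hrdef]; field_simp
            linarith
    have h3 := hσmin y
    have h4 : ‖(fderiv ℝ h w₀).adjoint y‖
        ≤ ‖(fderiv ℝ h u).adjoint y‖ + ‖(fderiv ℝ h w₀).adjoint y - (fderiv ℝ h u).adjoint y‖ := by
      have h5 : (fderiv ℝ h w₀).adjoint y
          = (fderiv ℝ h u).adjoint y + ((fderiv ℝ h w₀).adjoint y - (fderiv ℝ h u).adjoint y) := by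
        abel
      calc ‖(fderiv ℝ h w₀).adjoint y‖
          = ‖(fderiv ℝ h u).adjoint y + ((fderiv ℝ h w₀).adjoint y - (fderiv ℝ h u).adjoint y)‖ := by
            rw [← h5]
        _ ≤ _ := norm_add_le _ _
    linarith
  -- core estimate
  have est : ∀ T : ℝ, 0 ≤ T → (∀ s ∈ Set.Icc (0:ℝ) T, ‖w α s - w₀‖ ≤ r) →
      ∀ t' ∈ Set.Icc (0:ℝ) T, ‖w α t' - w₀‖ ≤ C' / α := by
    intro T hT hlz
    have hqlow : ∀ s ∈ Set.Icc (0:ℝ) T, c1 * Real.sqrt (g s) ≤ ‖q s‖ := by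
      intro s hs
      have h4 := lazy (w α s) (hlz s hs) (gradient R (α • h (w α s)))
      have h5 := pl_ineq hm hRdiff hRconv ystar hmin (α • h (w α s))
      have hy := norm_nonneg (gradient R (α • h (w α s)))
      have h6 : c1 ^ 2 * g s ≤ ‖q s‖ ^ 2 := by
        have hc1sq : c1 ^ 2 = (σmin / 2) ^ 2 * (2 * m) := by
          rw [hc1, mul_pow, Real.sq_sqrt h2m.le]
        have ha1 : (σmin / 2) ^ 2 * ‖gradient R (α • h (w α s))‖ ^ 2 ≤ ‖q s‖ ^ 2 := by
          nlinarith [mul_le_mul h4 h4 (by positivity : (0:ℝ) ≤ σmin / 2 * ‖gradient R (α • h (w α s))‖) (norm_nonneg (q s))]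
        have ha2 : (σmin / 2) ^ 2 * (2 * m * g s) ≤ (σmin / 2) ^ 2 * ‖gradient R (α • h (w α s))‖ ^ 2 :=
          mul_le_mul_of_nonneg_left h5 (by positivity)
        calc c1 ^ 2 * g s = (σmin / 2) ^ 2 * (2 * m * g s) := by rw [hc1sq]; ring
          _ ≤ (σmin / 2) ^ 2 * ‖gradient R (α • h (w α s))‖ ^ 2 := ha2
          _ ≤ ‖q s‖ ^ 2 := ha1
      calc c1 * Real.sqrt (g s) = Real.sqrt (c1 ^ 2 * g s) := by
            rw [Real.sqrt_mul (by positivity), Real.sqrt_sq hc1pos.le]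
        _ ≤ Real.sqrt (‖q s‖ ^ 2) := Real.sqrt_le_sqrt h6
        _ = ‖q s‖ := Real.sqrt_sq (norm_nonneg _)
    have keyε : ∀ ε : ℝ, 0 < ε → ∀ t' ∈ Set.Icc (0:ℝ) T,
        ‖w α t' - w₀‖ ≤ 2 / (α * c1) * Real.sqrt (g 0 + ε) + α⁻¹ * c1 * Real.sqrt ε * t' := by
      intro ε hε t' ht'
      have hgε : ∀ s, 0 < g s + ε := fun s => by have := hgnonneg s; linarith
      set B : ℝ → ℝ := fun s =>
        2 / (α * c1) * (Real.sqrt (g 0 + ε) - Real.sqrt (g s + ε)) + α⁻¹ * c1 * Real.sqrt ε * s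
        with hBdef
      set B' : ℝ → ℝ := fun s =>
        2 / (α * c1) * (‖q s‖ ^ 2 / (2 * Real.sqrt (g s + ε))) + α⁻¹ * c1 * Real.sqrt ε
        with hB'def
      have hBder : ∀ s : ℝ, 0 ≤ s → HasDerivAt B (B' s) s := by
        intro s hs
        have hs1 : HasDerivAt (fun u => g u + ε) (-‖q s‖ ^ 2) s := (hgder s hs).add_const ε
        have hs2 : HasDerivAt (fun u => Real.sqrt (g u + ε))
            (-‖q s‖ ^ 2 / (2 * Real.sqrt (g s + ε))) s := hs1.sqrt (hgε s).ne'
        have hs3 : HasDerivAt (fun u => Real.sqrt (g 0 + ε) - Real.sqrt (g u + ε))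
            (‖q s‖ ^ 2 / (2 * Real.sqrt (g s + ε))) s := by
          have := hs2.const_sub (Real.sqrt (g 0 + ε))
          simpa [neg_div] using this
        have hs4 := (hs3.const_mul (2 / (α * c1))).add
          (HasDerivAt.const_mul (α⁻¹ * c1 * Real.sqrt ε) (hasDerivAt_id s))
        rw [mul_one] at hs4; exact hs4
      have hfd : ∀ s ∈ Set.Ico (0:ℝ) T,
          HasDerivWithinAt (fun u => w α u - w₀) (-(α⁻¹ • q s)) (Set.Ici s) s :=
        fun s hs => ((hwder s hs.1).sub_const w₀).hasDerivWithinAt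
      have hbound : ∀ s ∈ Set.Ico (0:ℝ) T, ‖-(α⁻¹ • q s)‖ ≤ B' s := by
        intro s hs
        have hql := hqlow s ⟨hs.1, hs.2.le⟩
        have hnn := norm_nonneg (q s)
        have hsg := Real.sqrt_nonneg (g s)
        have hsε := Real.sqrt_nonneg ε
        have hS : 0 < Real.sqrt (g s + ε) := Real.sqrt_pos.2 (hgε s)
        have hsplit : Real.sqrt (g s + ε) ≤ Real.sqrt (g s) + Real.sqrt ε := by
          have hle : g s + ε ≤ (Real.sqrt (g s) + Real.sqrt ε) ^ 2 := by
            nlinarith [Real.sq_sqrt (hgnonneg s), Real.sq_sqrt hε.le]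
          have := Real.sqrt_le_sqrt hle
          rwa [Real.sqrt_sq (by positivity)] at this
        have hnd : ‖-(α⁻¹ • q s)‖ = α⁻¹ * ‖q s‖ := by
          rw [norm_neg, norm_smul, Real.norm_eq_abs, abs_of_pos (by positivity)]
        rw [hnd, hB'def]
        beta_reduce
        set S := Real.sqrt (g s + ε)
        set N := ‖q s‖
        have hYeq : 2 / (α * c1) * (N ^ 2 / (2 * S)) = N ^ 2 / (α * c1 * S) := by
          field_simp
        rw [hYeq]
        have hT2 : 0 ≤ α⁻¹ * c1 * Real.sqrt ε := by positivity
        rcases le_or_gt (c1 * S) N with hcase | hcase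
        · have hXY : α⁻¹ * N ≤ N ^ 2 / (α * c1 * S) := by
            rw [le_div_iff₀ (by positivity)]
            have heq2 : α⁻¹ * N * (α * c1 * S) = N * (c1 * S) := by
              field_simp
            rw [heq2]
            nlinarith
          linarith
        · have h1 : c1 * S - N ≤ c1 * Real.sqrt ε := by
            have h2 : c1 * S ≤ c1 * (Real.sqrt (g s) + Real.sqrt ε) :=
              mul_le_mul_of_nonneg_left hsplit hc1pos.le
            have h3 : c1 * Real.sqrt (g s) ≤ N := hql
            nlinarith
          have h4 : N * (c1 * S - N) ≤ (c1 * S) * (c1 * Real.sqrt ε) :=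
            mul_le_mul hcase.le h1 (by linarith) (by positivity)
          have h5 : α⁻¹ * N - N ^ 2 / (α * c1 * S) = N * (c1 * S - N) / (α * c1 * S) := by
            field_simp
          have h6 : N * (c1 * S - N) / (α * c1 * S) ≤ (c1 * S) * (c1 * Real.sqrt ε) / (α * c1 * S) :=
            div_le_div_of_nonneg_right h4 (by positivity)
          have h7 : (c1 * S) * (c1 * Real.sqrt ε) / (α * c1 * S) = α⁻¹ * c1 * Real.sqrt ε := by
            field_simp
          linarith [h5 ▸ (h6.trans_eq h7)]
      have hfc : ContinuousOn (fun u => w α u - w₀) (Set.Icc 0 T) := fun s hs =>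
        ((hwcont s hs.1).sub continuousAt_const).continuousWithinAt
      have hBc : ContinuousOn B (Set.Icc 0 T) := fun s hs =>
        (hBder s hs.1).continuousAt.continuousWithinAt
      have hBd : ∀ s ∈ Set.Ico (0:ℝ) T, HasDerivWithinAt B (B' s) (Set.Ici s) s :=
        fun s hs => (hBder s hs.1).hasDerivWithinAt
      have ha : ‖w α 0 - w₀‖ ≤ B 0 := by
        rw [hw0 α hαy]
        simp [hBdef]
      have hall := image_norm_le_of_norm_deriv_right_le_deriv_boundary' hfc hfd ha hBc hBd hbound
      have hres := hall ht'
      have hfin : B t' ≤ 2 / (α * c1) * Real.sqrt (g 0 + ε) + α⁻¹ * c1 * Real.sqrt ε * t' := by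
        rw [hBdef]
        have h8 : 0 ≤ Real.sqrt (g t' + ε) := Real.sqrt_nonneg _
        have h9 : (0:ℝ) ≤ 2 / (α * c1) := by positivity
        nlinarith
      exact hres.trans hfin
    intro t' ht'
    have hlim : Filter.Tendsto
        (fun ε : ℝ => 2 / (α * c1) * Real.sqrt (g 0 + ε) + α⁻¹ * c1 * Real.sqrt ε * t')
        (nhdsWithin 0 (Set.Ioi 0)) (nhds (2 / (α * c1) * Real.sqrt (g 0))) := by
      have hcont : Continuous
          (fun ε : ℝ => 2 / (α * c1) * Real.sqrt (g 0 + ε) + α⁻¹ * c1 * Real.sqrt ε * t') := by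
        continuity
      have hmono : nhdsWithin (0:ℝ) (Set.Ioi 0) ≤ nhds 0 := nhdsWithin_le_nhds
      have := (hcont.tendsto 0).mono_left hmono
      simpa using this
    have hev : ∀ᶠ ε in nhdsWithin (0:ℝ) (Set.Ioi 0),
        ‖w α t' - w₀‖ ≤ 2 / (α * c1) * Real.sqrt (g 0 + ε) + α⁻¹ * c1 * Real.sqrt ε * t' :=
      Filter.eventually_of_mem self_mem_nhdsWithin (fun ε hε => keyε ε hε t' ht')
    have hle := ge_of_tendsto hlim hev
    have hg0 : g 0 = R 0 - R ystar := by
      simp [hgdef, hw0 α hαy, h0]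
    have hg0le : g 0 ≤ M * ‖ystar‖ ^ 2 := by
      rw [hg0]; exact smooth_upper hM hRdiff hRgrad hmin
    have h10 : Real.sqrt (g 0) ≤ Real.sqrt (M * ‖ystar‖ ^ 2) := Real.sqrt_le_sqrt hg0le
    have h11 : 2 / (α * c1) * Real.sqrt (g 0) ≤ C' / α := by
      rw [hC'def]
      have e1 : 2 / (α * c1) * Real.sqrt (g 0) = 2 * Real.sqrt (g 0) / (c1 * α) := by
        ring
      have e2 : 2 * Real.sqrt (M * ‖ystar‖ ^ 2) / c1 / α
          = 2 * Real.sqrt (M * ‖ystar‖ ^ 2) / (c1 * α) := by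
        rw [div_div]
      rw [e1, e2]
      gcongr
    exact hle.trans h11
  -- continuous induction
  by_contra hcon
  push_neg at hcon
  set Bset : Set ℝ := {s : ℝ | 0 ≤ s ∧ C / α < ‖w α s - w₀‖} with hBsetdef
  have hne : Bset.Nonempty := ⟨t, ht, hcon⟩
  have hbdd : BddBelow Bset := ⟨0, fun s hs => hs.1⟩
  set T := sInf Bset with hTdef
  have hT0 : 0 ≤ T := le_csInf hne (fun s hs => hs.1)
  have hTnot : ∀ s, 0 ≤ s → s < T → ‖w α s - w₀‖ ≤ C / α := by
    intro s hs0 hsT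
    by_contra hc
    push_neg at hc
    exact absurd (csInf_le hbdd ⟨hs0, hc⟩) (not_le.2 hsT)
  have hcontn : ∀ s : ℝ, 0 ≤ s → ContinuousAt (fun u => ‖w α u - w₀‖) s := fun s hs =>
    ((hwcont s hs).sub continuousAt_const).norm
  have hfT : ‖w α T - w₀‖ ≤ C / α := by
    rcases eq_or_lt_of_le hT0 with hzero | hpos
    · rw [← hzero, hw0 α hαy]
      simp
      positivity
    · have htd : Filter.Tendsto (fun u => ‖w α u - w₀‖) (nhdsWithin T (Set.Iio T))
          (nhds ‖w α T - w₀‖) := ((hcontn T hT0).tendsto).mono_left nhdsWithin_le_nhds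
      refine le_of_tendsto htd ?_
      have hmem : Set.Ioo 0 T ∈ nhdsWithin T (Set.Iio T) :=
        Ioo_mem_nhdsLT_of_mem ⟨hpos, le_refl T⟩
      exact Filter.eventually_of_mem hmem (fun s hs => hTnot s hs.1.le hs.2)
  have hlz : ∀ s ∈ Set.Icc (0:ℝ) T, ‖w α s - w₀‖ ≤ r := by
    intro s hs
    rcases eq_or_lt_of_le hs.2 with heq | hlt
    · rw [heq]
      exact hfT.trans hCαr.le
    · exact (hTnot s hs.1 hlt).trans hCαr.le
  have himp := est T hT0 hlz T ⟨hT0, le_refl T⟩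
  have hTlt : ‖w α T - w₀‖ < C / α := by
    refine lt_of_le_of_lt himp ?_
    rw [hCdef]
    exact (div_lt_div_iff_of_pos_right hαpos).2 (lt_add_one C')
  have hopen : ∀ᶠ s in nhds T, ‖w α s - w₀‖ < C / α :=
    (hcontn T hT0).eventually_lt continuousAt_const hTlt
  obtain ⟨δ, hδpos, hδ⟩ := Metric.eventually_nhds_iff.1 hopen
  obtain ⟨b, hbB, hbδ⟩ := exists_lt_of_csInf_lt hne (show sInf Bset < T + δ by
    rw [← hTdef]; linarith)
  have hbT : T ≤ b := csInf_le hbdd hbB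
  have hbc : ‖w α b - w₀‖ < C / α := by
    apply hδ
    rw [Real.dist_eq, abs_lt]
    constructor <;> linarith
  exact absurd hbB.2 (not_lt.2 hbc.le)
end

section
/- Let F : 𝓕 → ℝ be m-strongly convex with M-Lipschitz gradient and global minimizer y⋆. Let T > 0 and let Σ(t), for 0 ≤ t ≤ T, be a time-dependent continuous family of bounded self-adjoint linear operators on 𝓕 satisfying ⟨Σ(t)y, y⟩ ≥ λ‖y‖² for all y ∈ 𝓕 and some λ > 0. Then any solution y : [0,T] → 𝓕 of the differential equation y′(t) = −Σ(t)∇F(y(t)) satisfies, for all 0 ≤ t ≤ T, ‖y(t) − y⋆‖ ≤ (M/m)^{1/2} ‖y(0) − y⋆‖ exp(−m λ t). -/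
open scoped RealInnerProductSpace NNReal


section helpers
variable {H : Type*} [NormedAddCommGroup H] [InnerProductSpace ℝ H] [CompleteSpace H]

lemma hasDerivAt_line (f : H → ℝ) (hdiff : Differentiable ℝ f) (x v : H) (s₀ : ℝ) :
    HasDerivAt (fun s : ℝ => f (x + s • v)) ⟪gradient f (x + s₀ • v), v⟫ s₀ := by
  have hline : HasDerivAt (fun s : ℝ => x + s • v) v s₀ := by
    simpa using ((hasDerivAt_id s₀).smul_const v).const_add x
  have hf := (hdiff (x + s₀ • v)).hasGradientAt
  rw [hasGradientAt_iff_hasFDerivAt] at hf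
  have := hf.comp_hasDerivAt s₀ hline
  simpa [InnerProductSpace.toDual_apply_apply, Function.comp_def] using this

lemma strong_first_order_s12 (f : H → ℝ) (hdiff : Differentiable ℝ f) (m : ℝ)
    (hconv : ConvexOn ℝ Set.univ (fun y => f y - m / 2 * ‖y‖ ^ 2)) (x v : H) :
    f x + ⟪gradient f x, v⟫ + m / 2 * ‖v‖ ^ 2 ≤ f (x + v) := by
  set φ : H → ℝ := fun y => f y - m / 2 * ‖y‖ ^ 2 with hφ
  set g : ℝ → ℝ := fun s => φ (x + s • v) with hg
  have gconv : ConvexOn ℝ Set.univ g := by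
    have := hconv.comp_affineMap (AffineMap.lineMap x (x + v))
    have he : g = φ ∘ (AffineMap.lineMap x (x + v)) := by
      funext s
      simp only [hg, Function.comp_apply, AffineMap.lineMap_apply_module]
      congr 1
      module
    rw [he]
    simpa using this
  have hexp : ∀ s : ℝ, g s = f (x + s • v) -
      (m / 2 * ‖x‖ ^ 2 + (m * ⟪x, v⟫) * s + m / 2 * ‖v‖ ^ 2 * s ^ 2) := by
    intro s
    have hn : ‖x + s • v‖ ^ 2 = ‖x‖ ^ 2 + 2 * (s * ⟪x, v⟫) + s ^ 2 * ‖v‖ ^ 2 := by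
      rw [← real_inner_self_eq_norm_sq, ← real_inner_self_eq_norm_sq,
        ← real_inner_self_eq_norm_sq]
      simp only [inner_add_add_self, real_inner_smul_left, real_inner_smul_right]
      rw [real_inner_comm v x]
      ring
    simp only [hg, hφ, hn]
    ring
  have hpoly : HasDerivAt (fun s : ℝ =>
      m / 2 * ‖x‖ ^ 2 + (m * ⟪x, v⟫) * s + m / 2 * ‖v‖ ^ 2 * s ^ 2)
      (m * ⟪x, v⟫) 0 := by
    have h1 : HasDerivAt (fun s : ℝ => m / 2 * ‖x‖ ^ 2 + (m * ⟪x, v⟫) * s)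
        (m * ⟪x, v⟫) 0 := by
      simpa using ((hasDerivAt_id (0:ℝ)).const_mul (m * ⟪x, v⟫)).const_add (m / 2 * ‖x‖ ^ 2)
    have h2 : HasDerivAt (fun s : ℝ => m / 2 * ‖v‖ ^ 2 * s ^ 2) 0 0 := by
      simpa using (hasDerivAt_pow 2 (0:ℝ)).const_mul (m / 2 * ‖v‖ ^ 2)
    simpa [Pi.add_def] using h1.add h2
  have gderiv : HasDerivAt g (⟪gradient f x, v⟫ - m * ⟪x, v⟫) 0 := by
    have hfd := hasDerivAt_line f hdiff x v 0
    have : HasDerivAt (fun s : ℝ => f (x + s • v) -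
        (m / 2 * ‖x‖ ^ 2 + (m * ⟪x, v⟫) * s + m / 2 * ‖v‖ ^ 2 * s ^ 2))
        (⟪gradient f x, v⟫ - m * ⟪x, v⟫) 0 := by
      simpa [Pi.sub_def] using hfd.sub hpoly
    exact this.congr_of_eventuallyEq (by filter_upwards with s using (hexp s))
  have hslope := gconv.le_slope_of_hasDerivAt (Set.mem_univ (0:ℝ)) (Set.mem_univ (1:ℝ))
    one_pos gderiv
  have hs : slope g 0 1 = g 1 - g 0 := by simp [slope_def_field]
  rw [hs] at hslope
  have hg1 : g 1 = f (x + v) - m / 2 * ‖x + v‖ ^ 2 := by simp [hg, hφ]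
  have hg0 : g 0 = f x - m / 2 * ‖x‖ ^ 2 := by simp [hg, hφ]
  have hn : ‖x + v‖ ^ 2 = ‖x‖ ^ 2 + 2 * ⟪x, v⟫ + ‖v‖ ^ 2 := by
    rw [← real_inner_self_eq_norm_sq, ← real_inner_self_eq_norm_sq,
      ← real_inner_self_eq_norm_sq]
    simp only [inner_add_add_self]
    rw [real_inner_comm v x]
    ring
  rw [hg1, hg0, hn] at hslope
  linarith

end helpers

section helpers2
variable {H : Type*} [NormedAddCommGroup H] [InnerProductSpace ℝ H] [CompleteSpace H]

lemma descent_lemma (f : H → ℝ) (hdiff : Differentiable ℝ f) (M : ℝ)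
    (hgrad : ∀ y z, ‖gradient f y - gradient f z‖ ≤ M * ‖y - z‖)
    (ystar : H) (grad0 : gradient f ystar = 0) (z : H) :
    f z - f ystar ≤ M / 2 * ‖z - ystar‖ ^ 2 := by
  set v : H := z - ystar with hv
  set g : ℝ → ℝ := fun s => f (ystar + s • v) with hgdef
  set h : ℝ → ℝ := fun s => M / 2 * ‖v‖ ^ 2 * s ^ 2 - (g s - g 0) with hhdef
  set h' : ℝ → ℝ := fun s => M * ‖v‖ ^ 2 * s - ⟪gradient f (ystar + s • v), v⟫ with hh'def
  have hder : ∀ s : ℝ, HasDerivAt h (h' s) s := by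
    intro s
    have h1 : HasDerivAt (fun s : ℝ => M / 2 * ‖v‖ ^ 2 * s ^ 2) (M * ‖v‖ ^ 2 * s) s := by
      have := (hasDerivAt_pow 2 s).const_mul (M / 2 * ‖v‖ ^ 2)
      refine this.congr_deriv ?_
      push_cast
      ring
    exact h1.sub ((hasDerivAt_line f hdiff ystar v s).sub_const (g 0))
  have hmono : MonotoneOn h (Set.Icc (0:ℝ) 1) := by
    apply monotoneOn_of_hasDerivWithinAt_nonneg (convex_Icc 0 1)
      (fun s _ => (hder s).continuousAt.continuousWithinAt)
      (fun s _ => (hder s).hasDerivWithinAt)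
    intro s hs
    rw [interior_Icc] at hs
    have hkey : ⟪gradient f (ystar + s • v), v⟫ ≤ M * ‖v‖ ^ 2 * s := by
      have h2 : ⟪gradient f (ystar + s • v), v⟫ ≤
          ‖gradient f (ystar + s • v) - gradient f ystar‖ * ‖v‖ := by
        rw [grad0, sub_zero]
        exact real_inner_le_norm _ _
      have h3 : ‖gradient f (ystar + s • v) - gradient f ystar‖ ≤ M * (s * ‖v‖) := by
        have := hgrad (ystar + s • v) ystar
        simpa [norm_smul, abs_of_pos hs.1] using this
      calc ⟪gradient f (ystar + s • v), v⟫ ≤ ‖gradient f (ystar + s • v) - gradient f ystar‖ * ‖v‖ := h2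
      _ ≤ M * (s * ‖v‖) * ‖v‖ := by
          apply mul_le_mul_of_nonneg_right h3 (norm_nonneg _)
      _ = M * ‖v‖ ^ 2 * s := by ring
    simp only [hh'def]
    linarith
  have h01 : h 0 ≤ h 1 := hmono (by constructor <;> norm_num) (by constructor <;> norm_num)
    zero_le_one
  have hg1 : g 1 = f z := by simp [hgdef, hv]
  have hg0 : g 0 = f ystar := by simp [hgdef]
  simp only [hhdef, hg1, hg0] at h01
  norm_num at h01
  linarith

end helpers2

/-- **Lemma B.1 (Strongly-convex gradient flow in a time-dependent metric).**
If `f` is `m`-strongly convex with `M`-Lipschitz gradient and minimizer `y⋆`, and `Σ(t)`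
is a continuous family of self-adjoint operators with eigenvalues bounded below by
`λ > 0` on `[0, T]`, then any solution of `y′(t) = −Σ(t)∇f(y(t))` satisfies
`‖y(t) − y⋆‖ ≤ (M/m)^{1/2} ‖y(0) − y⋆‖ exp(−mλt)` for `0 ≤ t ≤ T`. -/
theorem strongly_convex_flow_time_dependent_metric
    {H : Type*} [NormedAddCommGroup H] [InnerProductSpace ℝ H] [CompleteSpace H]
    (f : H → ℝ) (hdiff : Differentiable ℝ f)
    (m M : ℝ) (hm : 0 < m) (hM : 0 < M)
    (hconv : ConvexOn ℝ Set.univ (fun y => f y - m / 2 * ‖y‖ ^ 2))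
    (hgrad : ∀ y z, ‖gradient f y - gradient f z‖ ≤ M * ‖y - z‖)
    (ystar : H) (hmin : ∀ y, f ystar ≤ f y)
    (T : ℝ) (hT : 0 < T)
    (Sig : ℝ → H →L[ℝ] H) (hSigCont : ContinuousOn Sig (Set.Icc 0 T))
    (hSigSA : ∀ t ∈ Set.Icc (0 : ℝ) T, IsSelfAdjoint (Sig t))
    (lam : ℝ) (hlam : 0 < lam)
    (hSigLB : ∀ t ∈ Set.Icc (0 : ℝ) T, ∀ y : H, lam * ‖y‖ ^ 2 ≤ ⟪Sig t y, y⟫)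
    (y : ℝ → H)
    (hyflow : ∀ t ∈ Set.Icc (0 : ℝ) T, HasDerivAt y (-(Sig t (gradient f (y t)))) t) :
    ∀ t ∈ Set.Icc (0 : ℝ) T,
      ‖y t - ystar‖ ≤ Real.sqrt (M / m) * ‖y 0 - ystar‖ * Real.exp (-(m * lam * t)) := by
  -- gradient vanishes at the minimizer
  have grad0 : gradient f ystar = 0 := by
    have hlm : IsLocalMin f ystar := Filter.Eventually.of_forall hmin
    have hg := (hdiff ystar).hasGradientAt
    rw [hasGradientAt_iff_hasFDerivAt] at hg
    have h0 := hlm.hasFDerivAt_eq_zero hg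
    have := congrArg (InnerProductSpace.toDual ℝ H).symm h0
    exact (map_eq_zero_iff _ (InnerProductSpace.toDual ℝ H).injective).mp h0
  -- Polyak–Łojasiewicz inequality
  have PL : ∀ x : H, 2 * m * (f x - f ystar) ≤ ‖gradient f x‖ ^ 2 := by
    intro x
    have hso := strong_first_order_s12 f hdiff m hconv x (ystar - x)
    rw [add_sub_cancel] at hso
    have hib : |⟪gradient f x, ystar - x⟫| ≤ ‖gradient f x‖ * ‖ystar - x‖ :=
      abs_real_inner_le_norm _ _
    have h1 := abs_le.mp hib
    nlinarith [sq_nonneg (m * ‖ystar - x‖ - ‖gradient f x‖), norm_nonneg (ystar - x),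
      norm_nonneg (gradient f x)]
  -- quadratic lower bound
  have lowerq : ∀ z : H, m / 2 * ‖z - ystar‖ ^ 2 ≤ f z - f ystar := by
    intro z
    have hso := strong_first_order_s12 f hdiff m hconv ystar (z - ystar)
    rw [add_sub_cancel, grad0] at hso
    simp only [inner_zero_left] at hso
    linarith
  -- the Lyapunov function
  set E : ℝ → ℝ := fun t => (f (y t) - f ystar) * Real.exp (2 * m * lam * t) with hEdef
  set D : ℝ → ℝ := fun t =>
    (⟪gradient f (y t), -(Sig t (gradient f (y t)))⟫ + 2 * m * lam * (f (y t) - f ystar)) *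
      Real.exp (2 * m * lam * t) with hDdef
  have hEder : ∀ t ∈ Set.Icc (0:ℝ) T, HasDerivAt E (D t) t := by
    intro t ht
    have hfy := (hdiff (y t)).hasGradientAt
    rw [hasGradientAt_iff_hasFDerivAt] at hfy
    have hV : HasDerivAt (fun t => f (y t) - f ystar)
        ⟪gradient f (y t), -(Sig t (gradient f (y t)))⟫ t := by
      have := (hfy.comp_hasDerivAt t (hyflow t ht)).sub_const (f ystar)
      simpa [InnerProductSpace.toDual_apply_apply, Function.comp] using this
    have hlin : HasDerivAt (fun t : ℝ => 2 * m * lam * t) (2 * m * lam) t := by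
      simpa using (hasDerivAt_id t).const_mul (2 * m * lam)
    have hexp := hlin.exp
    have := hV.mul hexp
    refine this.congr_deriv ?_
    simp only [hDdef]
    ring
  have hEanti : AntitoneOn E (Set.Icc (0:ℝ) T) := by
    apply antitoneOn_of_hasDerivWithinAt_nonpos (convex_Icc 0 T)
      (fun t ht => (hEder t ht).continuousAt.continuousWithinAt)
      (fun t ht => ((hEder t (by rw [interior_Icc] at ht; exact Set.Ioo_subset_Icc_self ht)).hasDerivWithinAt))
    intro t ht
    rw [interior_Icc] at ht
    have ht' : t ∈ Set.Icc (0:ℝ) T := Set.Ioo_subset_Icc_self ht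
    have hLB := hSigLB t ht' (gradient f (y t))
    have hc : ⟪gradient f (y t), -(Sig t (gradient f (y t)))⟫ ≤ -(lam * ‖gradient f (y t)‖ ^ 2) := by
      rw [inner_neg_right, real_inner_comm]
      linarith
    have hPL := PL (y t)
    have hV0 : 0 ≤ f (y t) - f ystar := sub_nonneg.mpr (hmin _)
    have hsum : ⟪gradient f (y t), -(Sig t (gradient f (y t)))⟫ +
        2 * m * lam * (f (y t) - f ystar) ≤ 0 := by
      nlinarith [mul_le_mul_of_nonneg_left hPL hlam.le]
    simp only [hDdef]
    exact mul_nonpos_of_nonpos_of_nonneg hsum (Real.exp_pos _).le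
  intro t ht
  have hE0 : E t ≤ E 0 := hEanti (Set.left_mem_Icc.mpr hT.le) ht ht.1
  have hE0' : (f (y t) - f ystar) * Real.exp (2 * m * lam * t) ≤ f (y 0) - f ystar := by
    simpa [hEdef] using hE0
  have key1 := lowerq (y t)
  have key2 := descent_lemma f hdiff M hgrad ystar grad0 (y 0)
  have e1 : (0:ℝ) < Real.exp (2 * m * lam * t) := Real.exp_pos _
  -- combine
  have h4 : m / 2 * ‖y t - ystar‖ ^ 2 * Real.exp (2 * m * lam * t) ≤
      M / 2 * ‖y 0 - ystar‖ ^ 2 := by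
    calc m / 2 * ‖y t - ystar‖ ^ 2 * Real.exp (2 * m * lam * t)
        ≤ (f (y t) - f ystar) * Real.exp (2 * m * lam * t) :=
          mul_le_mul_of_nonneg_right key1 e1.le
      _ ≤ f (y 0) - f ystar := hE0'
      _ ≤ M / 2 * ‖y 0 - ystar‖ ^ 2 := key2
  have hRnn : 0 ≤ Real.sqrt (M / m) * ‖y 0 - ystar‖ * Real.exp (-(m * lam * t)) :=
    mul_nonneg (mul_nonneg (Real.sqrt_nonneg _) (norm_nonneg _)) (Real.exp_pos _).le
  refine le_of_pow_le_pow_left₀ two_ne_zero hRnn ?_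
  have hsq : Real.sqrt (M / m) ^ 2 = M / m := Real.sq_sqrt (div_nonneg hM.le hm.le)
  have hexp2 : Real.exp (-(m * lam * t)) ^ 2 = Real.exp (-(2 * m * lam * t)) := by
    rw [sq, ← Real.exp_add]
    ring_nf
  have hexpinv : Real.exp (2 * m * lam * t) * Real.exp (-(2 * m * lam * t)) = 1 := by
    rw [← Real.exp_add]; simp
  have h6 := mul_le_mul_of_nonneg_right h4 (Real.exp_pos (-(2 * m * lam * t))).le
  have h7 : m / 2 * ‖y t - ystar‖ ^ 2 ≤
      M / 2 * ‖y 0 - ystar‖ ^ 2 * Real.exp (-(2 * m * lam * t)) := by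
    calc m / 2 * ‖y t - ystar‖ ^ 2
        = m / 2 * ‖y t - ystar‖ ^ 2 * Real.exp (2 * m * lam * t) *
            Real.exp (-(2 * m * lam * t)) := by rw [mul_assoc, hexpinv, mul_one]
      _ ≤ M / 2 * ‖y 0 - ystar‖ ^ 2 * Real.exp (-(2 * m * lam * t)) := h6
  have hgoal : ‖y t - ystar‖ ^ 2 ≤
      (Real.sqrt (M / m) * ‖y 0 - ystar‖ * Real.exp (-(m * lam * t))) ^ 2 := by
    have hexpr : (Real.sqrt (M / m) * ‖y 0 - ystar‖ * Real.exp (-(m * lam * t))) ^ 2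
        = M / m * ‖y 0 - ystar‖ ^ 2 * Real.exp (-(2 * m * lam * t)) := by
      rw [mul_pow, mul_pow, hsq, hexp2]
    rw [hexpr]
    rw [div_mul_eq_mul_div, div_mul_eq_mul_div, le_div_iff₀ hm]
    nlinarith [h7]
  exact hgoal
end

section
/- Let R : 𝓕 → [0,∞) be m-strongly convex and let Σ(t), t ≥ 0, be a time-dependent continuous family of bounded self-adjoint positive definite linear operators on 𝓕 with ⟨Σ(t)y, y⟩ ≥ λ‖y‖² for all y ∈ 𝓕 and some λ > 0. Let y, ȳ : [0,∞) → 𝓕 solve y′(t) = −Σ(t)∇R(y(t)) and ȳ′(t) = −Σ(0)∇R(ȳ(t)) with y(0) = ȳ(0). Define K := sup_{t ≥ 0} ‖(Σ(t) − Σ(0))∇R(y(t))‖. Then for all t ≥ 0, ‖y(t) − ȳ(t)‖ ≤ K‖Σ(0)‖^{1/2}/(λ^{3/2} m), where ‖Σ(0)‖ is the operator norm of Σ(0). -/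
open scoped RealInnerProductSpace NNReal

lemma cs_pos_op {H : Type*} [NormedAddCommGroup H] [InnerProductSpace ℝ H]
    (T : H →L[ℝ] H) (hsymm : ∀ u v : H, ⟪T u, v⟫ = ⟪u, T v⟫)
    (hpos : ∀ u : H, 0 ≤ ⟪T u, u⟫) (u v : H) :
    ⟪T u, v⟫ ^ 2 ≤ ⟪T u, u⟫ * ⟪T v, v⟫ := by
  have key : ∀ t : ℝ, 0 ≤ ⟪T v, v⟫ * (t * t) + (2 * ⟪T u, v⟫) * t + ⟪T u, u⟫ := by
    intro t
    have h := hpos (u + t • v)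
    have hexp : ⟪T (u + t • v), u + t • v⟫
        = ⟪T u, u⟫ + t * ⟪T u, v⟫ + t * ⟪T v, u⟫ + t * (t * ⟪T v, v⟫) := by
      simp [map_add, map_smul, inner_add_left, inner_add_right, real_inner_smul_left,
        real_inner_smul_right]
      ring
    have hcomm : ⟪T v, u⟫ = ⟪T u, v⟫ := by
      rw [hsymm v u, real_inner_comm]
    rw [hexp, hcomm] at h
    nlinarith [h]
  have := discrim_le_zero key
  rw [discrim] at this
  nlinarith [this]

lemma grad_strong_mono {H : Type*} [NormedAddCommGroup H] [InnerProductSpace ℝ H]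
    [CompleteSpace H]
    (R : H → ℝ) (hRdiff : Differentiable ℝ R) (m : ℝ)
    (hRconv : ConvexOn ℝ Set.univ (fun y => R y - m / 2 * ‖y‖ ^ 2))
    (a b : H) :
    m * ‖b - a‖ ^ 2 ≤ ⟪gradient R b - gradient R a, b - a⟫ := by
  set v := b - a with hv
  set c : ℝ → H := fun t => t • v + a with hc
  have hcd : ∀ t : ℝ, HasDerivAt c v t := by
    intro t
    simpa [hc] using ((hasDerivAt_id t).smul_const v).add_const a
  set g : ℝ → ℝ := fun t => R (c t) - m / 2 * ‖c t‖ ^ 2 with hg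
  have hgd : ∀ t : ℝ, HasDerivAt g (⟪gradient R (c t), v⟫ - m / 2 * (⟪c t, v⟫ + ⟪v, c t⟫)) t := by
    intro t
    have h1 : HasDerivAt (fun s => R (c s)) (⟪gradient R (c t), v⟫) t := by
      have hgrad := (hRdiff (c t)).hasGradientAt
      rw [hasGradientAt_iff_hasFDerivAt] at hgrad
      have := hgrad.comp_hasDerivAt t (hcd t)
      simpa [InnerProductSpace.toDual_apply_apply, Function.comp_def] using this
    have h2 : HasDerivAt (fun s => ‖c s‖ ^ 2) (⟪c t, v⟫ + ⟪v, c t⟫) t := by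
      have := (hcd t).inner ℝ (hcd t)
      simpa [real_inner_self_eq_norm_sq] using this
    exact h1.sub (h2.const_mul (m / 2))
  have hconv : ConvexOn ℝ Set.univ g := by
    have haff : ConvexOn ℝ ((AffineMap.lineMap a b : ℝ →ᵃ[ℝ] H) ⁻¹' Set.univ)
        ((fun y => R y - m / 2 * ‖y‖ ^ 2) ∘ (AffineMap.lineMap a b : ℝ →ᵃ[ℝ] H)) :=
      hRconv.comp_affineMap _
    have : c = fun t => (AffineMap.lineMap a b : ℝ →ᵃ[ℝ] H) t := by
      funext t; simp [hc, AffineMap.lineMap_apply_module, hv]; module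
    rw [hg, this]
    simpa [Function.comp_def] using haff
  have hmono := hconv.monotoneOn_deriv (fun x _ => (hgd x).differentiableAt)
  have h01 : deriv g 0 ≤ deriv g 1 :=
    hmono (Set.mem_univ 0) (Set.mem_univ 1) zero_le_one
  rw [(hgd 0).deriv, (hgd 1).deriv] at h01
  have hc0 : c 0 = a := by simp [hc]
  have hc1 : c 1 = b := by simp [hc, hv]
  rw [hc0, hc1] at h01
  have e1 : ⟪gradient R b - gradient R a, v⟫ = ⟪gradient R b, v⟫ - ⟪gradient R a, v⟫ :=
    inner_sub_left _ _ _
  have e2 : (‖b - a‖ : ℝ) ^ 2 = ⟪v, b⟫ - ⟪v, a⟫ := by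
    rw [← real_inner_self_eq_norm_sq, hv]
    rw [inner_sub_right]
  have e3 : ⟪v, a⟫ = ⟪a, v⟫ := real_inner_comm _ _
  have e4 : ⟪v, b⟫ = ⟪b, v⟫ := real_inner_comm _ _
  have e5 : m * ‖b - a‖ ^ 2 = m / 2 * (⟪b, b - a⟫ + ⟪b - a, b⟫)
      - m / 2 * (⟪a, b - a⟫ + ⟪b - a, a⟫) := by
    rw [e2, e3, e4]; ring
  rw [hv] at *
  linarith [h01, e1, e5]

set_option maxHeartbeats 1000000 in
/-- **Lemma B.2 (Stability lemma).**
If `R` is `m`-strongly convex and `Σ(t)` is a continuous family of self-adjoint positive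
definite operators with `⟪Σ(t)y, y⟫ ≥ λ‖y‖²`, and `y, ȳ` solve `y′ = −Σ(t)∇R(y)` and
`ȳ′ = −Σ(0)∇R(ȳ)` from the same initial point, then with
`K := sup_{t ≥ 0} ‖(Σ(t) − Σ(0))∇R(y(t))‖` one has
`‖y(t) − ȳ(t)‖ ≤ K‖Σ(0)‖^{1/2}/(λ^{3/2} m)` for all `t ≥ 0`. -/
theorem stability_lemma_time_dependent_metric
    {H : Type*} [NormedAddCommGroup H] [InnerProductSpace ℝ H] [CompleteSpace H]
    (R : H → ℝ) (hRnonneg : ∀ y, 0 ≤ R y) (hRdiff : Differentiable ℝ R)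
    (m : ℝ) (hm : 0 < m)
    (hRconv : ConvexOn ℝ Set.univ (fun y => R y - m / 2 * ‖y‖ ^ 2))
    (Sig : ℝ → H →L[ℝ] H) (hSigCont : ContinuousOn Sig (Set.Ici 0))
    (hSigSA : ∀ t : ℝ, 0 ≤ t → IsSelfAdjoint (Sig t))
    (lam : ℝ) (hlam : 0 < lam)
    (hSigLB : ∀ t : ℝ, 0 ≤ t → ∀ y : H, lam * ‖y‖ ^ 2 ≤ ⟪Sig t y, y⟫)
    (y yb : ℝ → H) (hinit : y 0 = yb 0)
    (hyflow : ∀ t : ℝ, 0 ≤ t → HasDerivAt y (-(Sig t (gradient R (y t)))) t)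
    (hybflow : ∀ t : ℝ, 0 ≤ t → HasDerivAt yb (-(Sig 0 (gradient R (yb t)))) t)
    (K : ℝ) (hK : IsLUB {k : ℝ | ∃ t : ℝ, 0 ≤ t ∧ k = ‖(Sig t - Sig 0) (gradient R (y t))‖} K) :
    ∀ t : ℝ, 0 ≤ t →
      ‖y t - yb t‖ ≤ K * Real.sqrt ‖Sig 0‖ / (lam ^ ((3 : ℝ) / 2) * m) := by
  -- Basic facts about `T = Sig 0`.
  set T : H →L[ℝ] H := Sig 0 with hTdef
  have hTsa : IsSelfAdjoint T := hSigSA 0 le_rfl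
  have hTsymm : ∀ u v : H, ⟪T u, v⟫ = ⟪u, T v⟫ := fun u v => hTsa.isSymmetric u v
  have hTlb : ∀ u : H, lam * ‖u‖ ^ 2 ≤ ⟪T u, u⟫ := hSigLB 0 le_rfl
  have hTpos : ∀ u : H, 0 ≤ ⟪T u, u⟫ := fun u => le_trans (by positivity) (hTlb u)
  have hTnormlb : ∀ u : H, lam * ‖u‖ ≤ ‖T u‖ := by
    intro u
    rcases eq_or_ne u 0 with rfl | hu
    · simp
    · have h1 := hTlb u
      have h2 : ⟪T u, u⟫ ≤ ‖T u‖ * ‖u‖ := real_inner_le_norm _ _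
      have h3 : 0 < ‖u‖ := norm_pos_iff.mpr hu
      nlinarith
  -- `T` is bijective.
  have hker : LinearMap.ker (T : H →ₗ[ℝ] H) = ⊥ := by
    rw [LinearMap.ker_eq_bot]
    intro u v huv
    have h1 : T (u - v) = 0 := by rw [map_sub, show T u = T v from huv, sub_self]
    have h2 := hTnormlb (u - v)
    rw [h1, norm_zero] at h2
    have : ‖u - v‖ ≤ 0 := by nlinarith [norm_nonneg (u - v)]
    rwa [← sub_eq_zero, ← norm_le_zero_iff]
  have hanti : AntilipschitzWith lam⁻¹.toNNReal T := by
    apply T.antilipschitz_of_bound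
    intro x
    have := hTnormlb x
    rw [Real.coe_toNNReal _ (by positivity : (0:ℝ) ≤ lam⁻¹), inv_mul_eq_div,
      le_div_iff₀ hlam]
    linarith
  have hclosed : IsClosed (LinearMap.range (T : H →ₗ[ℝ] H) : Set H) :=
    hanti.isClosed_range T.uniformContinuous
  have hrange : LinearMap.range (T : H →ₗ[ℝ] H) = ⊤ := by
    haveI := hclosed.completeSpace_coe
    rw [← (LinearMap.range (T : H →ₗ[ℝ] H)).orthogonal_orthogonal, Submodule.eq_top_iff']
    intro v w hw
    obtain rfl : w = 0 := by
      have h1 : ⟪T w, w⟫ = 0 := hw (T w) ⟨w, rfl⟩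
      have h2 := hTlb w
      rw [h1] at h2
      have h3 : ‖w‖ ^ 2 ≤ 0 := by
        by_contra hc
        push_neg at hc
        nlinarith [mul_pos hlam hc]
      have : ‖w‖ ≤ 0 := by nlinarith [norm_nonneg w]
      rwa [← norm_le_zero_iff]
    exact inner_zero_left _
  -- The inverse `A` of `T`.
  set E : H ≃L[ℝ] H := ContinuousLinearEquiv.ofBijective T hker hrange with hEdef
  set A : H →L[ℝ] H := (E.symm : H →L[ℝ] H) with hAdef
  have hTA : ∀ u : H, T (A u) = u := fun u =>
    ContinuousLinearEquiv.ofBijective_apply_symm_apply T hker hrange u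
  have hAsymm : ∀ u v : H, ⟪A u, v⟫ = ⟪u, A v⟫ := by
    intro u v
    conv_lhs => rw [← hTA v]
    rw [← hTsymm, hTA]
  have hApos' : ∀ u : H, lam * ‖A u‖ ^ 2 ≤ ⟪A u, u⟫ := by
    intro u
    have h1 := hTlb (A u)
    calc lam * ‖A u‖ ^ 2 ≤ ⟪T (A u), A u⟫ := h1
      _ = ⟪A u, T (A u)⟫ := hTsymm _ _
      _ = ⟪A u, u⟫ := by rw [hTA]
  have hApos : ∀ u : H, 0 ≤ ⟪A u, u⟫ := fun u => le_trans (by positivity) (hApos' u)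
  have hAnorm : ∀ u : H, lam * ‖A u‖ ≤ ‖u‖ := by
    intro u
    have h1 := hApos' u
    have h2 : ⟪A u, u⟫ ≤ ‖A u‖ * ‖u‖ := real_inner_le_norm _ _
    rcases eq_or_lt_of_le (norm_nonneg (A u)) with h3 | h3
    · rw [← h3]; simpa using norm_nonneg u
    · nlinarith
  have hAupper : ∀ u : H, ⟪A u, u⟫ ≤ ‖u‖ ^ 2 / lam := by
    intro u
    have h1 := hAnorm u
    have h2 : ⟪A u, u⟫ ≤ ‖A u‖ * ‖u‖ := real_inner_le_norm _ _
    rw [le_div_iff₀ hlam]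
    nlinarith [norm_nonneg u, norm_nonneg (A u)]
  have hAlower : ∀ u : H, ‖u‖ ^ 2 ≤ ‖T‖ * ⟪A u, u⟫ := by
    intro u
    have h1 := cs_pos_op T hTsymm hTpos (A u) u
    rw [hTA] at h1
    have h2 : ⟪u, u⟫ = ‖u‖ ^ 2 := real_inner_self_eq_norm_sq u
    have h3 : ⟪u, A u⟫ = ⟪A u, u⟫ := real_inner_comm _ _
    have h4 : ⟪T u, u⟫ ≤ ‖T‖ * ‖u‖ ^ 2 := by
      calc ⟪T u, u⟫ ≤ ‖T u‖ * ‖u‖ := real_inner_le_norm _ _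
        _ ≤ (‖T‖ * ‖u‖) * ‖u‖ := by
            gcongr; exact T.le_opNorm u
        _ = ‖T‖ * ‖u‖ ^ 2 := by ring
    rcases eq_or_lt_of_le (norm_nonneg u) with h5 | h5
    · rw [← h5]
      simpa using mul_nonneg (norm_nonneg T) (hApos u)
    · have h7 : ‖u‖ ^ 2 * ‖u‖ ^ 2 ≤ (‖T‖ * ⟪A u, u⟫) * ‖u‖ ^ 2 := by
        calc ‖u‖ ^ 2 * ‖u‖ ^ 2 = ⟪u, u⟫ ^ 2 := by rw [h2]; ring
          _ ≤ ⟪u, A u⟫ * ⟪T u, u⟫ := h1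
          _ = ⟪A u, u⟫ * ⟪T u, u⟫ := by rw [h3]
          _ ≤ ⟪A u, u⟫ * (‖T‖ * ‖u‖ ^ 2) := mul_le_mul_of_nonneg_left h4 (hApos u)
          _ = (‖T‖ * ⟪A u, u⟫) * ‖u‖ ^ 2 := by ring
      exact le_of_mul_le_mul_right h7 (by positivity)
  -- Basic facts about `K`.
  have hKnn : 0 ≤ K := hK.1 ⟨0, le_rfl, by simp [hTdef]⟩
  have hKbd : ∀ t : ℝ, 0 ≤ t → ‖(Sig t - T) (gradient R (y t))‖ ≤ K :=
    fun t ht => hK.1 ⟨t, ht, rfl⟩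
  -- The error and the Lyapunov function.
  set e : ℝ → H := fun t => y t - yb t with hedef
  set V : ℝ → ℝ := fun t => ⟪A (e t), e t⟫ with hVdef
  have hV0 : V 0 = 0 := by simp [hVdef, hedef, hinit]
  have hVpos : ∀ t : ℝ, 0 ≤ V t := fun t => hApos (e t)
  have hVd : ∀ t : ℝ, 0 ≤ t →
      HasDerivAt V (2 * ⟪A (e t), -(Sig t (gradient R (y t))) + T (gradient R (yb t))⟫) t := by
    intro t ht
    have he : HasDerivAt e (-(Sig t (gradient R (y t))) + T (gradient R (yb t))) t := by
      have := (hyflow t ht).sub (hybflow t ht)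
      simpa [hedef, sub_neg_eq_add, Pi.sub_def] using this
    have hAe : HasDerivAt (fun s => A (e s))
        (A (-(Sig t (gradient R (y t))) + T (gradient R (yb t)))) t :=
      A.hasFDerivAt.comp_hasDerivAt t he
    have hprod := hAe.inner ℝ he
    have hswap : ⟪A (-(Sig t (gradient R (y t))) + T (gradient R (yb t))), e t⟫
        = ⟪A (e t), -(Sig t (gradient R (y t))) + T (gradient R (yb t))⟫ := by
      rw [hAsymm, real_inner_comm]
    rw [hswap] at hprod
    convert hprod using 1
    · rfl
    · rfl
    · ring
  have hVcont : ∀ t : ℝ, 0 ≤ t → ContinuousAt V t := fun t ht => (hVd t ht).continuousAt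
  -- the constant
  set c : ℝ := K / (m * (lam * Real.sqrt lam)) with hcdef
  have hsqlam : 0 < Real.sqrt lam := Real.sqrt_pos.mpr hlam
  have hden : 0 < m * (lam * Real.sqrt lam) := by positivity
  have hc0 : 0 ≤ c := div_nonneg hKnn hden.le
  -- V has strictly negative derivative whenever it exceeds c^2
  have hVderiv_lt : ∀ t : ℝ, 0 ≤ t → c ^ 2 < V t → deriv V t < 0 := by
    intro t ht hVt
    rw [(hVd t ht).deriv]
    set δ : H := (Sig t - T) (gradient R (y t)) with hδdef
    set g : H := gradient R (y t) - gradient R (yb t) with hgdef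
    have hsplit : -(Sig t (gradient R (y t))) + T (gradient R (yb t)) = -δ - T g := by
      simp only [hδdef, hgdef, ContinuousLinearMap.sub_apply, map_sub]
      abel
    rw [hsplit]
    have hinner : ⟪A (e t), -δ - T g⟫ = -⟪A (e t), δ⟫ - ⟪A (e t), T g⟫ := by
      rw [inner_sub_right, inner_neg_right]
    have h1 : ⟪A (e t), T g⟫ = ⟪e t, g⟫ := by rw [← hTsymm, hTA]
    have h2 : m * ‖e t‖ ^ 2 ≤ ⟪e t, g⟫ := by
      have h2' := grad_strong_mono R hRdiff m hRconv (yb t) (y t)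
      rw [real_inner_comm] at h2'
      exact h2'
    -- bound the cross term
    have hcs := cs_pos_op A hAsymm hApos (e t) δ
    have hAd : ⟪A δ, δ⟫ ≤ K ^ 2 / lam := by
      have hup := hAupper δ
      have hd : ‖δ‖ ≤ K := hKbd t ht
      have : ‖δ‖ ^ 2 ≤ K ^ 2 := by nlinarith [norm_nonneg δ]
      calc ⟪A δ, δ⟫ ≤ ‖δ‖ ^ 2 / lam := hup
        _ ≤ K ^ 2 / lam := by gcongr
    have hsq : ⟪A (e t), δ⟫ ^ 2 ≤ V t * (K ^ 2 / lam) := by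
      calc ⟪A (e t), δ⟫ ^ 2 ≤ ⟪A (e t), e t⟫ * ⟪A δ, δ⟫ := hcs
        _ ≤ V t * (K ^ 2 / lam) := mul_le_mul_of_nonneg_left hAd (hVpos t)
    have hKlam : K ^ 2 / lam = (K / Real.sqrt lam) ^ 2 := by
      rw [div_pow, Real.sq_sqrt hlam.le]
    have h3 : |⟪A (e t), δ⟫| ≤ Real.sqrt (V t) * (K / Real.sqrt lam) := by
      rw [← Real.sqrt_sq_eq_abs]
      calc Real.sqrt (⟪A (e t), δ⟫ ^ 2) ≤ Real.sqrt (V t * (K ^ 2 / lam)) :=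
            Real.sqrt_le_sqrt hsq
        _ = Real.sqrt (V t) * (K / Real.sqrt lam) := by
            rw [Real.sqrt_mul (hVpos t), hKlam, Real.sqrt_sq (by positivity)]
    -- the quantitative bound on V'
    have hlamV : lam * V t ≤ ‖e t‖ ^ 2 := by
      have := hAupper (e t)
      rw [le_div_iff₀ hlam] at this
      nlinarith [this]
    set s : ℝ := Real.sqrt (V t) with hsdef
    have hs2 : s ^ 2 = V t := Real.sq_sqrt (hVpos t)
    have hcs' : c < s := by
      by_contra hcon
      push_neg at hcon
      have : V t ≤ c ^ 2 := by nlinarith [Real.sqrt_nonneg (V t)]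
      linarith
    have hspos : 0 < s := lt_of_le_of_lt hc0 hcs'
    have hmc : m * lam * c = K / Real.sqrt lam := by
      rw [hcdef]
      field_simp
    have haux : lam * s ^ 2 ≤ ‖e t‖ ^ 2 := by rw [hs2]; exact hlamV
    have haux2 : m * (lam * s ^ 2) ≤ m * ‖e t‖ ^ 2 :=
      mul_le_mul_of_nonneg_left haux hm.le
    have hprod : 0 < m * lam * s * (s - c) :=
      mul_pos (mul_pos (mul_pos hm hlam) hspos) (sub_pos.mpr hcs')
    calc 2 * ⟪A (e t), -δ - T g⟫
        = 2 * (-⟪A (e t), δ⟫ - ⟪e t, g⟫) := by rw [hinner, h1]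
      _ ≤ 2 * (s * (K / Real.sqrt lam) - m * ‖e t‖ ^ 2) := by
          have := neg_abs_le ⟪A (e t), δ⟫
          have h3' : -⟪A (e t), δ⟫ ≤ s * (K / Real.sqrt lam) := by
            rw [hsdef]; linarith
          linarith [h2]
      _ ≤ 2 * s * (K / Real.sqrt lam) - 2 * m * lam * s ^ 2 := by linarith
      _ < 0 := by rw [← hmc]; nlinarith [hprod]
  -- V stays below c^2
  have hVle : ∀ t : ℝ, 0 ≤ t → V t ≤ c ^ 2 := by
    intro t0 ht0
    by_contra hcon
    push_neg at hcon
    set S : Set ℝ := {s | s ∈ Set.Icc (0 : ℝ) t0 ∧ V s ≤ c ^ 2} with hSdef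
    have hS0 : (0 : ℝ) ∈ S := ⟨⟨le_rfl, ht0⟩, by rw [hV0]; positivity⟩
    have hSbdd : BddAbove S := ⟨t0, fun s hs => hs.1.2⟩
    have hScl : IsClosed S := by
      have hVcont' : ContinuousOn V (Set.Icc 0 t0) :=
        fun s hs => (hVcont s hs.1).continuousWithinAt
      have : S = Set.Icc 0 t0 ∩ V ⁻¹' Set.Iic (c ^ 2) := by
        ext x; simp [hSdef, Set.mem_Iic, and_comm]
      rw [this]
      exact hVcont'.preimage_isClosed_of_isClosed isClosed_Icc isClosed_Iic
    set s' : ℝ := sSup S with hs'def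
    have hs'mem : s' ∈ S := hScl.csSup_mem ⟨0, hS0⟩ hSbdd
    have hs'lt : s' < t0 := by
      rcases lt_or_eq_of_le hs'mem.1.2 with h | h
      · exact h
      · exfalso; rw [h] at hs'mem; linarith [hs'mem.2]
    have hanti2 : StrictAntiOn V (Set.Icc s' t0) := by
      apply strictAntiOn_of_deriv_neg (convex_Icc _ _)
      · exact fun x hx => (hVcont x (le_trans hs'mem.1.1 hx.1)).continuousWithinAt
      · intro x hx
        rw [interior_Icc] at hx
        have hx0 : (0 : ℝ) ≤ x := le_trans hs'mem.1.1 hx.1.le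
        apply hVderiv_lt x hx0
        by_contra hle
        push_neg at hle
        have hxS : x ∈ S := ⟨⟨hx0, hx.2.le⟩, hle⟩
        exact absurd (le_csSup hSbdd hxS) (not_le.mpr hx.1)
    have hlast : V t0 < V s' :=
      hanti2 (Set.left_mem_Icc.mpr hs'lt.le) (Set.right_mem_Icc.mpr hs'lt.le) hs'lt
    linarith [hs'mem.2]
  -- conclusion
  intro t ht
  have h1 : ‖e t‖ ^ 2 ≤ ‖T‖ * V t := hAlower (e t)
  have h2 : V t ≤ c ^ 2 := hVle t ht
  have h3 : ‖e t‖ ^ 2 ≤ ‖T‖ * c ^ 2 :=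
    le_trans h1 (mul_le_mul_of_nonneg_left h2 (norm_nonneg (T : H →L[ℝ] H)))
  have hfin : ‖e t‖ ≤ Real.sqrt ‖T‖ * c := by
    have h4 : ‖e t‖ = Real.sqrt (‖e t‖ ^ 2) := (Real.sqrt_sq (norm_nonneg _)).symm
    rw [h4]
    calc Real.sqrt (‖e t‖ ^ 2) ≤ Real.sqrt (‖T‖ * c ^ 2) := Real.sqrt_le_sqrt h3
      _ = Real.sqrt ‖T‖ * c := by
          rw [Real.sqrt_mul (norm_nonneg _), Real.sqrt_sq hc0]
  have hrpow : lam ^ ((3 : ℝ) / 2) = lam * Real.sqrt lam := by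
    rw [show (3 : ℝ) / 2 = 1 + 1 / 2 by norm_num, Real.rpow_add hlam, Real.rpow_one,
      ← Real.sqrt_eq_rpow]
  have hgoal : K * Real.sqrt ‖T‖ / (lam ^ ((3 : ℝ) / 2) * m) = Real.sqrt ‖T‖ * c := by
    rw [hrpow, hcdef]
    field_simp
  rw [hTdef] at hgoal hfin
  rw [hgoal]
  exact hfin
end

section
/- Suppose Dh is L-Lipschitz in operator norm and that ‖Dh(w₀)ᵀ y‖ ≥ σ_min ‖y‖ for all y ∈ 𝓕, where σ_min > 0. Then for every w ∈ ℝ^p with ‖w − w₀‖ < σ_min/(2L), the tangent kernel Σ(w) := Dh(w)Dh(w)ᵀ satisfies ⟨Σ(w) y, y⟩ ≥ (σ_min²/4) ‖y‖² for all y ∈ 𝓕. -/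
set_option maxHeartbeats 1000000


open scoped RealInnerProductSpace NNReal

/-- **Lower bound on the tangent kernel near the initialization.**
If `Dh` is `L`-Lipschitz and `‖Dh(w₀)ᵀ y‖ ≥ σ_min ‖y‖` with `σ_min > 0`, then for every
`w` with `‖w − w₀‖ < σ_min/(2L)` the tangent kernel `Σ(w) = Dh(w)Dh(w)ᵀ` satisfies
`⟪Σ(w) y, y⟫ ≥ (σ_min²/4)‖y‖²`. -/
theorem tangent_kernel_lower_bound_near_init
    {p : ℕ} {H : Type*} [NormedAddCommGroup H] [InnerProductSpace ℝ H] [CompleteSpace H]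
    (h : EuclideanSpace ℝ (Fin p) → H) (hdiff : Differentiable ℝ h)
    (L : ℝ) (hL : 0 < L)
    (hDhLip : ∀ u v, ‖fderiv ℝ h u - fderiv ℝ h v‖ ≤ L * ‖u - v‖)
    (w₀ : EuclideanSpace ℝ (Fin p))
    (σmin : ℝ) (hσ : 0 < σmin)
    (hσmin : ∀ y : H, σmin * ‖y‖ ≤ ‖(fderiv ℝ h w₀).adjoint y‖) :
    ∀ w : EuclideanSpace ℝ (Fin p), ‖w - w₀‖ < σmin / (2 * L) →
      ∀ y : H, σmin ^ 2 / 4 * ‖y‖ ^ 2 ≤ ⟪(fderiv ℝ h w) ((fderiv ℝ h w).adjoint y), y⟫ := by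
  intro w hw y
  have key : ⟪(fderiv ℝ h w) ((fderiv ℝ h w).adjoint y), y⟫
      = ‖(fderiv ℝ h w).adjoint y‖ ^ 2 := by
    rw [← ContinuousLinearMap.adjoint_inner_right, real_inner_self_eq_norm_sq]
  rw [key]
  -- bound on the perturbation of the adjoint
  have hdiff1 : ‖(fderiv ℝ h w).adjoint y - (fderiv ℝ h w₀).adjoint y‖
      ≤ σmin / 2 * ‖y‖ := by
    have : (fderiv ℝ h w).adjoint y - (fderiv ℝ h w₀).adjoint y
        = ((fderiv ℝ h w).adjoint - (fderiv ℝ h w₀).adjoint) y := rfl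
    rw [this]
    calc ‖((fderiv ℝ h w).adjoint - (fderiv ℝ h w₀).adjoint) y‖
        ≤ ‖(fderiv ℝ h w).adjoint - (fderiv ℝ h w₀).adjoint‖ * ‖y‖ :=
          ContinuousLinearMap.le_opNorm _ _
      _ = ‖fderiv ℝ h w - fderiv ℝ h w₀‖ * ‖y‖ := by
          rw [← map_sub (ContinuousLinearMap.adjoint :
            (EuclideanSpace ℝ (Fin p) →L[ℝ] H) ≃ₗᵢ⋆[ℝ] (H →L[ℝ] EuclideanSpace ℝ (Fin p)))]
          rw [LinearIsometryEquiv.norm_map]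
      _ ≤ (L * ‖w - w₀‖) * ‖y‖ := by
          have := hDhLip w w₀
          nlinarith [norm_nonneg y, norm_nonneg (fderiv ℝ h w - fderiv ℝ h w₀)]
      _ ≤ σmin / 2 * ‖y‖ := by
          have hle : L * ‖w - w₀‖ ≤ σmin / 2 := by
            have := hw.le
            calc L * ‖w - w₀‖ ≤ L * (σmin / (2 * L)) := by
                  exact mul_le_mul_of_nonneg_left this hL.le
              _ = σmin / 2 := by field_simp
          nlinarith [norm_nonneg y, norm_nonneg (w - w₀)]
  have hlow : σmin / 2 * ‖y‖ ≤ ‖(fderiv ℝ h w).adjoint y‖ := by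
    have h1 := hσmin y
    have h2 : ‖(fderiv ℝ h w₀).adjoint y‖ - ‖(fderiv ℝ h w).adjoint y‖
        ≤ σmin / 2 * ‖y‖ := by
      calc ‖(fderiv ℝ h w₀).adjoint y‖ - ‖(fderiv ℝ h w).adjoint y‖
          ≤ ‖(fderiv ℝ h w₀).adjoint y - (fderiv ℝ h w).adjoint y‖ :=
            norm_sub_norm_le _ _
        _ = ‖(fderiv ℝ h w).adjoint y - (fderiv ℝ h w₀).adjoint y‖ := norm_sub_rev _ _
        _ ≤ σmin / 2 * ‖y‖ := hdiff1
    nlinarith [norm_nonneg y]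
  have hnn : (0:ℝ) ≤ σmin / 2 * ‖y‖ := by positivity
  nlinarith [hlow, norm_nonneg ((fderiv ℝ h w).adjoint y)]
end
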